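/- The coefficient of the highest-order pole of Γ(k) = χ_n(k)···χ_1(k) at k = k̄₁ is the rank-one matrix (Π_{j=1}^{n−1} ⟨w_{j+1}|v_j⟩) · v_n w_1^T; precisely, the limit as k → k̄₁ of (k−k̄₁)^n · Γ(k) exists and equals (Π_{j=1}^{n−1} ⟨w_{j+1}|v_j⟩) · v_n w_1^T. -/

import Mathlib

open scoped BigOperators Matrix
open Matrix


lemma vmv_mul {N : ℕ} (a b c d : Fin N → ℂ) :
    vecMulVec a b * vecMulVec c d = (∑ k, b k * c k) • vecMulVec a d := by
  ext i j
  simp only [Matrix.mul_apply, vecMulVec_apply, Matrix.smul_apply, smul_eq_mul,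
    Finset.sum_mul]
  rw [Finset.sum_congr rfl]
  intro k _
  ring

lemma smul_list_prod' {N : ℕ} (c : ℂ) (L : List (Matrix (Fin N) (Fin N) ℂ)) :
    (L.map (c • ·)).prod = c ^ L.length • L.prod := by
  induction L with
  | nil => simp
  | cons h t ih =>
      simp only [List.map_cons, List.prod_cons, ih, List.length_cons, pow_succ,
        smul_mul_assoc, mul_smul_comm, smul_smul]


lemma prodA {N : ℕ} (v w : ℕ → Fin N → ℂ) : ∀ n, 1 ≤ n →
    (List.ofFn (fun j : Fin n => Matrix.vecMulVec (v j) (w j))).reverse.prod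
      = (∏ j ∈ Finset.range (n-1), ∑ a, w (j+1) a * v j a) •
          Matrix.vecMulVec (v (n-1)) (w 0) := by
  intro n
  induction n with
  | zero => omega
  | succ m ih =>
      intro _
      rcases Nat.eq_zero_or_pos m with hm | hm
      · subst hm; simp
      · rw [List.ofFn_succ', List.concat_eq_append, List.reverse_append,
          List.reverse_singleton, List.singleton_append, List.prod_cons]
        simp only [Fin.coe_castSucc, Fin.val_last]
        rw [ih hm, mul_smul_comm, vmv_mul, smul_smul]
        congr 1
        rw [Nat.add_sub_cancel]
        have h1 : m - 1 + 1 = m := by omega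
        rw [← h1, Finset.prod_range_succ, h1, mul_comm]

/-- The coefficient of the highest-order pole of
`Γ(k) = χ_n(k)···χ_1(k)` at `k = k̄₁` is
`(Π_{j=1}^{n−1} ⟨w_{j+1}|v_j⟩) · v_n w_1ᵀ`: the limit of `(k−k̄₁)^n Γ(k)` as
`k → k̄₁` exists and equals this rank-one matrix. (Indices shifted to start at 0.) -/
theorem highest_pole_coefficient (N n : ℕ) (hN : 1 ≤ N) (hn : 1 ≤ n)
    (kb : ℂ)
    (v w : ℕ → Fin N → ℂ)
    (Γ : ℂ → Matrix (Fin N) (Fin N) ℂ)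
    (hΓ : ∀ k, Γ k = (List.ofFn (fun j : Fin n =>
      (1 : Matrix (Fin N) (Fin N) ℂ) +
        (k - kb)⁻¹ • Matrix.vecMulVec (v j) (w j))).reverse.prod) :
    Filter.Tendsto (fun k : ℂ => (k - kb) ^ n • Γ k) (nhdsWithin kb {kb}ᶜ)
      (nhds ((∏ j ∈ Finset.range (n - 1), ∑ a, w (j + 1) a * v j a) •
        Matrix.vecMulVec (v (n - 1)) (w 0))) := by
  set F : ℂ → Matrix (Fin N) (Fin N) ℂ := fun k =>
    (List.ofFn (fun j : Fin n =>
      (k - kb) • (1 : Matrix (Fin N) (Fin N) ℂ) + Matrix.vecMulVec (v j) (w j))).reverse.prod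
    with hF
  have hcont : Continuous F := by
    have : F = fun k => (((List.finRange n).reverse).map
        (fun j : Fin n => (k - kb) • (1 : Matrix (Fin N) (Fin N) ℂ)
          + Matrix.vecMulVec (v j) (w j))).prod := by
      funext k
      rw [hF]
      simp [List.ofFn_eq_map, List.map_reverse]
    rw [this]
    apply continuous_list_prod
    intro j _
    exact (((continuous_id.sub continuous_const).smul continuous_const).add
      continuous_const)
  have hFkb : F kb = (∏ j ∈ Finset.range (n - 1), ∑ a, w (j + 1) a * v j a) •
      Matrix.vecMulVec (v (n - 1)) (w 0) := by
    rw [hF]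
    simp only [sub_self, zero_smul, zero_add]
    exact prodA v w n hn
  have heq : ∀ k : ℂ, k ≠ kb → (k - kb) ^ n • Γ k = F k := by
    intro k hk
    have hc : k - kb ≠ 0 := sub_ne_zero.mpr hk
    rw [hΓ, hF]
    have hlen : ((List.ofFn (fun j : Fin n =>
        (1 : Matrix (Fin N) (Fin N) ℂ) +
          (k - kb)⁻¹ • Matrix.vecMulVec (v j) (w j))).reverse).length = n := by
      simp
    have hs := smul_list_prod' (k - kb) ((List.ofFn (fun j : Fin n =>
        (1 : Matrix (Fin N) (Fin N) ℂ) +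
          (k - kb)⁻¹ • Matrix.vecMulVec (v j) (w j))).reverse)
    rw [hlen] at hs
    rw [← hs, List.map_reverse]
    show _ = (List.ofFn fun j : Fin n => (k - kb) • (1 : Matrix (Fin N) (Fin N) ℂ) + Matrix.vecMulVec (v j) (w j)).reverse.prod
    congr 1
    rw [List.map_ofFn]
    refine congrArg List.reverse (congrArg List.ofFn (funext fun j => ?_))
    simp only [Function.comp_apply, smul_add, smul_smul, mul_inv_cancel₀ hc, one_smul]
  have := (hcont.tendsto kb).mono_left (nhdsWithin_le_nhds (s := {kb}ᶜ))
  rw [hFkb] at this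
  refine this.congr' ?_
  filter_upwards [self_mem_nhdsWithin] with k hk
  exact (heq k hk).symm
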